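/- Let a, b ∈ O be distinct observed vertices. Then the following are equivalent: (1) there exist distinct c, d ∈ O with c, d ∉ {a, b} such that {a, b} separates c from d in G_c (i.e., every walk from c to d in G_c passes through a or b); (2) a and b are adjacent in G_T and both a and b have degree at least 2 in G_T. -/

import Mathlib

/-- The graph `G_c` on the observed vertices: distinct observed `a, b` are
adjacent iff `dist(a,b) ≤ 2` in `G`, or there is a hidden vertex `l` with
`dist(a,l) ≤ 2` and `dist(b,l) ≤ 2`. -/
def Gc {V : Type*} (G : SimpleGraph V) (HidS : Set V) :
    SimpleGraph {v : V // v ∉ HidS} where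
  Adj a b := a ≠ b ∧ (G.dist a.1 b.1 ≤ 2 ∨
    ∃ l ∈ HidS, G.dist a.1 l ≤ 2 ∧ G.dist b.1 l ≤ 2)
  symm := by
    constructor
    rintro a b ⟨hab, h⟩
    refine ⟨hab.symm, ?_⟩
    rcases h with h | ⟨l, hl, h1, h2⟩
    · exact Or.inl (by rwa [SimpleGraph.dist_comm])
    · exact Or.inr ⟨l, hl, h2, h1⟩
  loopless := by constructor; rintro a ⟨h, -⟩; exact h rfl

section SepAux

open SimpleGraph

variable {V : Type*}


open SimpleGraph

variable {V : Type*}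

lemma deg_two_of_two_nbrs [Fintype V] [DecidableEq V] {G : SimpleGraph V} [DecidableRel G.Adj]
    {x y z : V} (hy : G.Adj x y) (hz : G.Adj x z) (hyz : y ≠ z) : 2 ≤ G.degree x :=
  Finset.one_lt_card.mpr ⟨y, by simpa using hy, z, by simpa using hz, hyz⟩

lemma dist_le_one_of_adj {G : SimpleGraph V} {x y : V} (h : G.Adj x y) : G.dist x y ≤ 1 := by
  simpa using SimpleGraph.dist_le h.toWalk

lemma dist_le_two_of_adj2 {G : SimpleGraph V} {x y z : V} (h1 : G.Adj x y) (h2 : G.Adj y z) :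
    G.dist x z ≤ 2 := by
  simpa using SimpleGraph.dist_le (Walk.cons h1 (Walk.cons h2 Walk.nil))

lemma dist_le_three_of_adj3 {G : SimpleGraph V} {x y z t : V} (h1 : G.Adj x y) (h2 : G.Adj y z)
    (h3 : G.Adj z t) : G.dist x t ≤ 3 := by
  simpa using SimpleGraph.dist_le (Walk.cons h1 (Walk.cons h2 (Walk.cons h3 Walk.nil)))

lemma reach_aux {G : SimpleGraph V} (av bv : V) {v t : V} (w : G.Walk v t)
    (ht : (G.deleteEdges {s(av,bv)}).Reachable t av ∨ (G.deleteEdges {s(av,bv)}).Reachable t bv) :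
    (G.deleteEdges {s(av,bv)}).Reachable v av ∨ (G.deleteEdges {s(av,bv)}).Reachable v bv := by
  induction w with
  | nil => exact ht
  | @cons x y t h q ih =>
    by_cases he : s(x, y) = s(av, bv)
    · rw [Sym2.eq_iff] at he
      rcases he with ⟨rfl, rfl⟩ | ⟨rfl, rfl⟩
      · exact Or.inl (Reachable.refl _)
      · exact Or.inr (Reachable.refl _)
    · have hH : (G.deleteEdges {s(av,bv)}).Adj x y := deleteEdges_adj.mpr ⟨h, by simpa using he⟩
      rcases ih ht with h' | h'
      · exact Or.inl (hH.reachable.trans h')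
      · exact Or.inr (hH.reachable.trans h')

lemma reach_total {G : SimpleGraph V} (hconn : G.Connected) (av bv : V) (v : V) :
    (G.deleteEdges {s(av,bv)}).Reachable v av ∨ (G.deleteEdges {s(av,bv)}).Reachable v bv := by
  obtain ⟨w⟩ := hconn v av
  exact reach_aux av bv w (Or.inl (Reachable.refl _))

lemma no_reach_of_bridge {G : SimpleGraph V} (hacyc : G.IsAcyclic) {av bv : V}
    (hadj : G.Adj av bv) : ¬ (G.deleteEdges {s(av,bv)}).Reachable av bv :=
  isAcyclic_iff_forall_adj_isBridge.mp hacyc hadj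

open SimpleGraph
variable {V : Type*}

lemma cross_support {G : SimpleGraph V} (hacyc : G.IsAcyclic) {av bv : V} (hadj : G.Adj av bv)
    {x y : V} (hx : (G.deleteEdges {s(av,bv)}).Reachable x av)
    (hy : (G.deleteEdges {s(av,bv)}).Reachable y bv) (w : G.Walk x y) :
    av ∈ w.support ∧ bv ∈ w.support := by
  by_cases he : s(av, bv) ∈ w.edges
  · exact ⟨w.fst_mem_support_of_mem_edges he, w.snd_mem_support_of_mem_edges he⟩
  · exfalso
    have hw : (G.deleteEdges {s(av,bv)}).Reachable x y :=
      ⟨w.toDeleteEdges _ (fun e' he' => by rintro rfl; exact he he')⟩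
    exact no_reach_of_bridge hacyc hadj ((hx.symm.trans hw).trans hy)

lemma dist_split [DecidableEq V] {G : SimpleGraph V} (hconn : G.Connected) {x y m : V}
    (h : ∀ w : G.Walk x y, m ∈ w.support) : G.dist x m + G.dist m y ≤ G.dist x y := by
  obtain ⟨p, hp⟩ := hconn.exists_walk_length_eq_dist x y
  have hm := h p
  calc G.dist x m + G.dist m y ≤ (p.takeUntil m hm).length + (p.dropUntil m hm).length :=
        Nat.add_le_add (SimpleGraph.dist_le _) (SimpleGraph.dist_le _)
    _ = p.length := by
        rw [← Walk.length_append]; exact congrArg Walk.length (p.take_spec hm)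
    _ = G.dist x y := hp

lemma dist_lower [DecidableEq V] {G : SimpleGraph V} (hconn : G.Connected) (hacyc : G.IsAcyclic) {av bv : V}
    (hadj : G.Adj av bv) {x y : V} (hx : (G.deleteEdges {s(av,bv)}).Reachable x av)
    (hy : (G.deleteEdges {s(av,bv)}).Reachable y bv) :
    G.dist x av + 1 + G.dist bv y ≤ G.dist x y := by
  have h1 : G.dist x av + G.dist av y ≤ G.dist x y :=
    dist_split hconn (fun w => (cross_support hacyc hadj hx hy w).1)
  have h2 : G.dist av bv + G.dist bv y ≤ G.dist av y :=
    dist_split hconn (fun w => (cross_support hacyc hadj (Reachable.refl _) hy w).2)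
  have h3 : G.dist av bv = 1 :=
    le_antisymm (dist_le_one_of_adj hadj) (hconn.pos_dist_of_ne hadj.ne)
  omega

open SimpleGraph
variable {V : Type*}

lemma gc_no_cross [DecidableEq V] {G : SimpleGraph V} (hconn : G.Connected)
    (hacyc : G.IsAcyclic) {HidS : Set V} {av bv : V} (hav : av ∉ HidS) (hbv : bv ∉ HidS)
    (hadj : G.Adj av bv) {x y : {v : V // v ∉ HidS}}
    (hx : (G.deleteEdges {s(av,bv)}).Reachable x.1 av)
    (hy : (G.deleteEdges {s(av,bv)}).Reachable y.1 bv)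
    (hxa : x.1 ≠ av) (hyb : y.1 ≠ bv) : ¬ (Gc G HidS).Adj x y := by
  rintro ⟨hne, h2 | ⟨l, hl, hl1, hl2⟩⟩
  · have hlow := dist_lower hconn hacyc hadj hx hy
    have p1 : 0 < G.dist x.1 av := hconn.pos_dist_of_ne hxa
    have p2 : 0 < G.dist bv y.1 := hconn.pos_dist_of_ne (fun h => hyb h.symm)
    omega
  · rcases reach_total hconn av bv l with hlA | hlB
    · have hlow := dist_lower hconn hacyc hadj hlA hy
      have p2 : 0 < G.dist bv y.1 := hconn.pos_dist_of_ne (fun h => hyb h.symm)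
      have hly : G.dist l y.1 ≤ 2 := by rwa [SimpleGraph.dist_comm]
      have : G.dist l av = 0 := by omega
      exact hav (hconn.dist_eq_zero_iff.mp this ▸ hl)
    · have hlow := dist_lower hconn hacyc hadj hx hlB
      have p1 : 0 < G.dist x.1 av := hconn.pos_dist_of_ne hxa
      have : G.dist bv l = 0 := by omega
      exact hbv ((hconn.dist_eq_zero_iff.mp this).symm ▸ hl)

lemma no_walk [DecidableEq V] {G : SimpleGraph V} (hconn : G.Connected)
    (hacyc : G.IsAcyclic) {HidS : Set V} {av bv : V} (hav : av ∉ HidS) (hbv : bv ∉ HidS)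
    (hadj : G.Adj av bv) {d : {v : V // v ∉ HidS}}
    (hd : (G.deleteEdges {s(av,bv)}).Reachable d.1 bv) :
    ∀ (u : {v : V // v ∉ HidS}) (w : (Gc G HidS).Walk u d),
      (∀ s ∈ w.support, s.1 ≠ av ∧ s.1 ≠ bv) →
      (G.deleteEdges {s(av,bv)}).Reachable u.1 av → False := by
  intro u w
  induction w with
  | nil =>
    intro _ hu
    exact no_reach_of_bridge hacyc hadj (hu.symm.trans hd)
  | @cons u x d h q ih =>
    intro hsup hu
    rcases reach_total hconn av bv x.1 with hxA | hxB
    · exact ih hd (fun s hs => hsup s (by simp [Walk.support_cons, hs])) hxA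
    · refine gc_no_cross hconn hacyc hav hbv hadj hu hxB ?_ ?_ h
      · exact (hsup u (by simp [Walk.support_cons])).1
      · exact (hsup x (by simp [Walk.support_cons, q.start_mem_support])).2

lemma exists_cside [Fintype V] [DecidableEq V] {G : SimpleGraph V} [DecidableRel G.Adj]
    (hconn : G.Connected) {HidS : Set V}
    (hHid4 : ∀ l₁ ∈ HidS, ∀ l₂ ∈ HidS, l₁ ≠ l₂ → 4 ≤ G.dist l₁ l₂)
    (hleaf : ∀ l ∈ HidS, ∀ v : V, G.degree v = 1 → 3 ≤ G.dist l v)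
    {av bv : V} (hav : av ∉ HidS) (hbv : bv ∉ HidS)
    (hadj : G.Adj av bv) (hdeg : 2 ≤ G.degree av) :
    ∃ c : V, c ∉ HidS ∧ c ≠ av ∧ (G.deleteEdges {s(av,bv)}).Reachable c av := by
  obtain ⟨x, hx, y, hy, hxy⟩ := Finset.one_lt_card.mp hdeg
  rw [mem_neighborFinset] at hx hy
  obtain ⟨a', ha'adj, ha'b⟩ : ∃ a', G.Adj av a' ∧ a' ≠ bv := by
    by_cases hxb : x = bv
    · exact ⟨y, hy, fun h => hxy (hxb.trans h.symm)⟩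
    · exact ⟨x, hx, hxb⟩
  have hea' : s(a', av) ≠ s(av, bv) := by
    intro h
    rw [Sym2.eq_iff] at h
    rcases h with ⟨rfl, rfl⟩ | ⟨rfl, -⟩
    · exact hadj.ne rfl
    · exact ha'b rfl
  have hA' : (G.deleteEdges {s(av,bv)}).Reachable a' av :=
    (deleteEdges_adj.mpr ⟨ha'adj.symm, by simpa using hea'⟩).reachable
  by_cases ha'H : a' ∈ HidS
  · -- a' is hidden; it has a second neighbor a'' ≠ av which is observed
    have hdeg' : 2 ≤ G.degree a' := by
      have h1 : G.degree a' ≠ 1 := fun h => by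
        have := hleaf a' ha'H a' h
        simp [SimpleGraph.dist_self] at this
      have h0 : 0 < G.degree a' := by
        rw [← card_neighborFinset_eq_degree]
        exact Finset.card_pos.mpr ⟨av, by simpa using ha'adj.symm⟩
      omega
    obtain ⟨x', hx', y', hy', hxy'⟩ := Finset.one_lt_card.mp hdeg'
    rw [mem_neighborFinset] at hx' hy'
    obtain ⟨a'', ha''adj, ha''a⟩ : ∃ a'', G.Adj a' a'' ∧ a'' ≠ av := by
      by_cases hxa : x' = av
      · exact ⟨y', hy', fun h => hxy' (hxa.trans h.symm)⟩
      · exact ⟨x', hx', hxa⟩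
    have ha''H : a'' ∉ HidS := fun hH => by
      have h4 := hHid4 a' ha'H a'' hH ha''adj.ne
      have := dist_le_one_of_adj ha''adj
      omega
    have hea'' : s(a'', a') ≠ s(av, bv) := by
      intro h
      rw [Sym2.eq_iff] at h
      rcases h with ⟨-, rfl⟩ | ⟨-, rfl⟩
      · exact hbv ha'H
      · exact hav ha'H
    have hA'' : (G.deleteEdges {s(av,bv)}).Reachable a'' av :=
      (deleteEdges_adj.mpr ⟨ha''adj.symm, by simpa using hea''⟩).reachable.trans hA'
    exact ⟨a'', ha''H, ha''a, hA''⟩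
  · exact ⟨a', ha'H, fun h => ha'adj.ne h.symm, hA'⟩

open SimpleGraph
variable {V : Type*}

lemma mk_ne {HidS : Set V} {x y : V} (hx : x ∉ HidS) (hy : y ∉ HidS) (h : x ≠ y) :
    (⟨x, hx⟩ : {v : V // v ∉ HidS}) ≠ ⟨y, hy⟩ := fun he => h (congrArg Subtype.val he)

lemma ne_of_isPath_cons {G : SimpleGraph V} {u v x y : V} {h : G.Adj u v} {p : G.Walk v x}
    (hp : (SimpleGraph.Walk.cons h p).IsPath) (hy : y ∈ p.support) : u ≠ y :=
  fun he => ((SimpleGraph.Walk.cons_isPath_iff _ _).mp hp).2 (he ▸ hy)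

lemma hid_eq_of_close {G : SimpleGraph V} {HidS : Set V}
    (hHid4 : ∀ l₁ ∈ HidS, ∀ l₂ ∈ HidS, l₁ ≠ l₂ → 4 ≤ G.dist l₁ l₂)
    {l1 l2 : V} (h1 : l1 ∈ HidS) (h2 : l2 ∈ HidS) (hd : G.dist l1 l2 ≤ 3) : l1 = l2 := by
  by_contra hne
  have := hHid4 l1 h1 l2 h2 hne
  omega

lemma pairFalse [Fintype V] [DecidableEq V] {G : SimpleGraph V} [DecidableRel G.Adj]
    {av bv : V} (Hneg : ¬(G.Adj av bv ∧ 2 ≤ G.degree av ∧ 2 ≤ G.degree bv))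
    {x v w y : V} (hxv : G.Adj x v) (hvw : G.Adj v w) (hwy : G.Adj w y)
    (hxw : x ≠ w) (hvy : v ≠ y) (hv : v = av ∨ v = bv) (hw : w = av ∨ w = bv) : False := by
  have hdv : 2 ≤ G.degree v := deg_two_of_two_nbrs hxv.symm hvw hxw
  have hdw : 2 ≤ G.degree w := deg_two_of_two_nbrs hvw.symm hwy hvy
  rcases hv with rfl | rfl <;> rcases hw with rfl | rfl
  · exact hvw.ne rfl
  · exact Hneg ⟨hvw, hdv, hdw⟩
  · exact Hneg ⟨hvw.symm, hdw, hdv⟩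
  · exact hvw.ne rfl

open SimpleGraph
variable {V : Type*}

set_option maxHeartbeats 2000000 in
lemma two_elt {α : Sort*} {v z t av bv : α} (h1 : v = av ∨ v = bv)
    (h2 : z = av ∨ z = bv) (h3 : t = av ∨ t = bv) : v = z ∨ v = t ∨ z = t := by
  rcases h1 with h1 | h1 <;> rcases h2 with h2 | h2 <;> rcases h3 with h3 | h3 <;>
    first
      | exact Or.inl (h1.trans h2.symm)
      | exact Or.inr (Or.inl (h1.trans h3.symm))
      | exact Or.inr (Or.inr (h2.trans h3.symm))

lemma build [Fintype V] [DecidableEq V] {G : SimpleGraph V} [DecidableRel G.Adj]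
    {HidS : Set V}
    (hHid4 : ∀ l₁ ∈ HidS, ∀ l₂ ∈ HidS, l₁ ≠ l₂ → 4 ≤ G.dist l₁ l₂)
    {av bv : V} (hav : av ∉ HidS) (hbv : bv ∉ HidS)
    (Hneg : ¬(G.Adj av bv ∧ 2 ≤ G.degree av ∧ 2 ≤ G.degree bv))
    {dv : V} (hd : dv ∉ HidS) (hdav : dv ≠ av) (hdbv : dv ≠ bv) :
    ∀ (n : ℕ) (u : V) (hu : u ∉ HidS), u ≠ av → u ≠ bv →
      ∀ (p : G.Walk u dv), p.length ≤ n → p.IsPath →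
      ∃ w : (Gc G HidS).Walk ⟨u, hu⟩ ⟨dv, hd⟩,
        (⟨av, hav⟩ : {v : V // v ∉ HidS}) ∉ w.support ∧
        (⟨bv, hbv⟩ : {v : V // v ∉ HidS}) ∉ w.support := by
  intro n
  induction n with
  | zero =>
    intro u hu hua hub p hn hp
    cases p with
    | nil =>
      exact ⟨Walk.nil, by
        simp only [Walk.support_nil, List.mem_singleton]
        exact mk_ne hav hu (fun h => hua h.symm), by
        simp only [Walk.support_nil, List.mem_singleton]
        exact mk_ne hbv hu (fun h => hub h.symm)⟩
    | cons a1 q => simp [Walk.length_cons] at hn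
  | succ n IH =>
    intro u hu hua hub p hn hp
    cases p with
    | nil =>
      exact ⟨Walk.nil, by
        simp only [Walk.support_nil, List.mem_singleton]
        exact mk_ne hav hu (fun h => hua h.symm), by
        simp only [Walk.support_nil, List.mem_singleton]
        exact mk_ne hbv hu (fun h => hub h.symm)⟩
    | @cons _ v _ a1 q =>
      simp only [Walk.length_cons] at hn
      by_cases hv : v ∈ HidS ∨ v = av ∨ v = bv
      case neg =>
        push_neg at hv
        obtain ⟨hvH, hva, hvb⟩ := hv
        obtain ⟨w', h1, h2⟩ := IH v hvH hva hvb q (by omega) hp.of_cons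
        have hGc : (Gc G HidS).Adj ⟨u, hu⟩ ⟨v, hvH⟩ :=
          ⟨mk_ne hu hvH a1.ne, Or.inl (le_trans (dist_le_one_of_adj a1) one_le_two)⟩
        refine ⟨Walk.cons hGc w', ?_, ?_⟩
        · simp only [Walk.support_cons, List.mem_cons, not_or]
          exact ⟨mk_ne hav hu (fun h => hua h.symm), h1⟩
        · simp only [Walk.support_cons, List.mem_cons, not_or]
          exact ⟨mk_ne hbv hu (fun h => hub h.symm), h2⟩
      case pos =>
      cases q with
      | nil =>
        exact absurd hv (by push_neg; exact ⟨hd, hdav, hdbv⟩)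
      | @cons _ w _ a2 q2 =>
        simp only [Walk.length_cons] at hn
        by_cases hw : w ∈ HidS ∨ w = av ∨ w = bv
        case neg =>
          push_neg at hw
          obtain ⟨hwH, hwa, hwb⟩ := hw
          have huw : u ≠ w := ne_of_isPath_cons hp
            (by simp [Walk.support_cons, q2.start_mem_support])
          obtain ⟨w', h1, h2⟩ := IH w hwH hwa hwb q2 (by omega) hp.of_cons.of_cons
          have hGc : (Gc G HidS).Adj ⟨u, hu⟩ ⟨w, hwH⟩ :=
            ⟨mk_ne hu hwH huw, Or.inl (dist_le_two_of_adj2 a1 a2)⟩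
          refine ⟨Walk.cons hGc w', ?_, ?_⟩
          · simp only [Walk.support_cons, List.mem_cons, not_or]
            exact ⟨mk_ne hav hu (fun h => hua h.symm), h1⟩
          · simp only [Walk.support_cons, List.mem_cons, not_or]
            exact ⟨mk_ne hbv hu (fun h => hub h.symm), h2⟩
        case pos =>
        cases q2 with
        | nil =>
          exact absurd hw (by push_neg; exact ⟨hd, hdav, hdbv⟩)
        | @cons _ z _ a3 q3 =>
          simp only [Walk.length_cons] at hn
          have hvz : v ≠ z := ne_of_isPath_cons hp.of_cons
            (by simp [Walk.support_cons, q3.start_mem_support])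
          have huz : u ≠ z := ne_of_isPath_cons hp
            (by simp [Walk.support_cons, q3.start_mem_support])
          by_cases hvH : v ∈ HidS
          · -- v hidden; w ∈ {av, bv}
            have hwH : w ∉ HidS := fun h =>
              a2.ne (hid_eq_of_close hHid4 hvH h (le_trans (dist_le_one_of_adj a2) (by norm_num)))
            have hw' : w = av ∨ w = bv := hw.resolve_left hwH
            by_cases hz : z ∈ HidS ∨ z = av ∨ z = bv
            · -- z bad; z not hidden, so z ∈ {av,bv}; pair (w,z)
              have hzH : z ∉ HidS := fun h =>
                hvz (hid_eq_of_close hHid4 hvH h (le_trans (dist_le_two_of_adj2 a2 a3) (by norm_num)))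
              have hz' : z = av ∨ z = bv := hz.resolve_left hzH
              exfalso
              cases q3 with
              | nil => exact absurd hz (by push_neg; exact ⟨hd, hdav, hdbv⟩)
              | @cons _ t _ a4 q4 =>
                have hwt : w ≠ t := ne_of_isPath_cons hp.of_cons.of_cons
                  (by simp [Walk.support_cons, q4.start_mem_support])
                exact pairFalse Hneg a2 a3 a4 hvz hwt hw' hz'
            · -- z good: skip [v, w] using hidden l = v
              push_neg at hz
              obtain ⟨hzH, hza, hzb⟩ := hz
              obtain ⟨w', h1, h2⟩ := IH z hzH hza hzb q3 (by omega) hp.of_cons.of_cons.of_cons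
              have hGc : (Gc G HidS).Adj ⟨u, hu⟩ ⟨z, hzH⟩ :=
                ⟨mk_ne hu hzH huz, Or.inr ⟨v, hvH,
                  le_trans (dist_le_one_of_adj a1) one_le_two,
                  by rw [SimpleGraph.dist_comm]; exact dist_le_two_of_adj2 a2 a3⟩⟩
              refine ⟨Walk.cons hGc w', ?_, ?_⟩
              · simp only [Walk.support_cons, List.mem_cons, not_or]
                exact ⟨mk_ne hav hu (fun h => hua h.symm), h1⟩
              · simp only [Walk.support_cons, List.mem_cons, not_or]
                exact ⟨mk_ne hbv hu (fun h => hub h.symm), h2⟩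
          · -- v ∈ {av, bv}
            have hv' : v = av ∨ v = bv := hv.resolve_left hvH
            by_cases hwH : w ∈ HidS
            · -- pattern (a|b), hidden, ?
              by_cases hz : z ∈ HidS ∨ z = av ∨ z = bv
              · -- z bad, not hidden, so z ∈ {av, bv}; pattern v h z with {v,z}={av,bv}
                have hzH : z ∉ HidS := fun h =>
                  a3.ne (hid_eq_of_close hHid4 hwH h (le_trans (dist_le_one_of_adj a3) (by norm_num)))
                have hz' : z = av ∨ z = bv := hz.resolve_left hzH
                cases q3 with
                | nil => exact absurd hz (by push_neg; exact ⟨hd, hdav, hdbv⟩)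
                | @cons _ t _ a4 q4 =>
                  simp only [Walk.length_cons] at hn
                  have hwt : w ≠ t := ne_of_isPath_cons hp.of_cons.of_cons
                    (by simp [Walk.support_cons, q4.start_mem_support])
                  have hvt : v ≠ t := ne_of_isPath_cons hp.of_cons
                    (by simp [Walk.support_cons, q4.start_mem_support])
                  have hut : u ≠ t := ne_of_isPath_cons hp
                    (by simp [Walk.support_cons, q4.start_mem_support])
                  by_cases ht : t ∈ HidS ∨ t = av ∨ t = bv
                  · -- t bad: contradiction, three distinct vertices in {av, bv}
                    exfalso
                    have htH : t ∉ HidS := fun h =>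
                      hwt (hid_eq_of_close hHid4 hwH h (le_trans (dist_le_two_of_adj2 a3 a4) (by norm_num)))
                    have ht' : t = av ∨ t = bv := ht.resolve_left htH
                    have hzt : z ≠ t := a4.ne
                    exact (two_elt hv' hz' ht').elim hvz (fun h => h.elim hvt hzt)
                  · -- t good: skip [v, w, z] with l = w
                    push_neg at ht
                    obtain ⟨htH, hta, htb⟩ := ht
                    obtain ⟨w', h1, h2⟩ :=
                      IH t htH hta htb q4 (by omega) hp.of_cons.of_cons.of_cons.of_cons
                    have hGc : (Gc G HidS).Adj ⟨u, hu⟩ ⟨t, htH⟩ :=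
                      ⟨mk_ne hu htH hut, Or.inr ⟨w, hwH,
                        dist_le_two_of_adj2 a1 a2,
                        by rw [SimpleGraph.dist_comm]; exact dist_le_two_of_adj2 a3 a4⟩⟩
                    refine ⟨Walk.cons hGc w', ?_, ?_⟩
                    · simp only [Walk.support_cons, List.mem_cons, not_or]
                      exact ⟨mk_ne hav hu (fun h => hua h.symm), h1⟩
                    · simp only [Walk.support_cons, List.mem_cons, not_or]
                      exact ⟨mk_ne hbv hu (fun h => hub h.symm), h2⟩
              · -- z good: skip [v, w] with l = w
                push_neg at hz
                obtain ⟨hzH, hza, hzb⟩ := hz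
                obtain ⟨w', h1, h2⟩ := IH z hzH hza hzb q3 (by omega) hp.of_cons.of_cons.of_cons
                have hGc : (Gc G HidS).Adj ⟨u, hu⟩ ⟨z, hzH⟩ :=
                  ⟨mk_ne hu hzH huz, Or.inr ⟨w, hwH,
                    dist_le_two_of_adj2 a1 a2,
                    by rw [SimpleGraph.dist_comm]; exact le_trans (dist_le_one_of_adj a3) one_le_two⟩⟩
                refine ⟨Walk.cons hGc w', ?_, ?_⟩
                · simp only [Walk.support_cons, List.mem_cons, not_or]
                  exact ⟨mk_ne hav hu (fun h => hua h.symm), h1⟩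
                · simp only [Walk.support_cons, List.mem_cons, not_or]
                  exact ⟨mk_ne hbv hu (fun h => hub h.symm), h2⟩
            · -- v, w both in {av, bv}: pair (v, w)
              have hw' : w = av ∨ w = bv := hw.resolve_left hwH
              have huw : u ≠ w := ne_of_isPath_cons hp
                (by simp [Walk.support_cons, q3.start_mem_support])
              exact absurd (pairFalse Hneg a1 a2 a3 huw hvz hv' hw') (fun h => h)


end SepAux

/-- Separation test for true edges among non-leaf observed vertices: there exist
distinct observed `c, d ∉ {a, b}` such that `{a, b}` separates `c` from `d` in
`G_c` iff `a` and `b` are adjacent in the tree `G_T` and both are non-leaf. -/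
theorem separation_iff_nonleaf_edge {V : Type*} [Fintype V] [DecidableEq V]
    (G : SimpleGraph V) [DecidableRel G.Adj]
    (hconn : G.Connected) (hacyc : G.IsAcyclic)
    (HidS : Set V) [DecidablePred (· ∈ HidS)]
    (hHid4 : ∀ l₁ ∈ HidS, ∀ l₂ ∈ HidS, l₁ ≠ l₂ → 4 ≤ G.dist l₁ l₂)
    (hleaf : ∀ l ∈ HidS, ∀ v : V, G.degree v = 1 → 3 ≤ G.dist l v)
    (a b : {v : V // v ∉ HidS}) (hab : a ≠ b) :
    (∃ c d : {v : V // v ∉ HidS}, c ≠ d ∧ c ≠ a ∧ c ≠ b ∧ d ≠ a ∧ d ≠ b ∧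
        ∀ w : (Gc G HidS).Walk c d, a ∈ w.support ∨ b ∈ w.support) ↔
      (G.Adj a.1 b.1 ∧ 2 ≤ G.degree a.1 ∧ 2 ≤ G.degree b.1) := by
  constructor
  · rintro ⟨c, d, hcd, hca, hcb, hda, hdb, hsep⟩
    by_contra Hneg
    obtain ⟨w0⟩ := hconn c.1 d.1
    have hp : w0.bypass.IsPath := SimpleGraph.Walk.bypass_isPath w0
    obtain ⟨w, hwa, hwb⟩ := build hHid4 a.2 b.2 Hneg d.2
      (fun h => hda (Subtype.ext h)) (fun h => hdb (Subtype.ext h))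
      w0.bypass.length c.1 c.2
      (fun h => hca (Subtype.ext h)) (fun h => hcb (Subtype.ext h))
      w0.bypass le_rfl hp
    rcases hsep w with h | h
    · exact hwa h
    · exact hwb h
  · rintro ⟨hadj, hda2, hdb2⟩
    obtain ⟨cv, hcH, hcav, hcreach⟩ := exists_cside hconn hHid4 hleaf a.2 b.2 hadj hda2
    obtain ⟨dv, hdH, hdbv, hdreach'⟩ := exists_cside hconn hHid4 hleaf b.2 a.2 hadj.symm hdb2
    have hdreach : (G.deleteEdges {s(a.1, b.1)}).Reachable dv b.1 := by
      rwa [show (s(b.1, a.1) : Sym2 V) = s(a.1, b.1) from Sym2.eq_swap] at hdreach'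
    have hbridge := no_reach_of_bridge hacyc hadj
    have hcbv : cv ≠ b.1 := by rintro rfl; exact hbridge hcreach.symm
    have hdav : dv ≠ a.1 := by
      rintro rfl
      exact hbridge hdreach
    have hcd : cv ≠ dv := by
      rintro rfl
      exact hbridge (hcreach.symm.trans hdreach)
    refine ⟨⟨cv, hcH⟩, ⟨dv, hdH⟩,
      fun h => hcd (congrArg Subtype.val h),
      fun h => hcav (congrArg Subtype.val h),
      fun h => hcbv (congrArg Subtype.val h),
      fun h => hdav (congrArg Subtype.val h),
      fun h => hdbv (congrArg Subtype.val h), ?_⟩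
    intro w
    by_contra hcon
    push_neg at hcon
    refine no_walk hconn hacyc a.2 b.2 hadj hdreach ⟨cv, hcH⟩ w ?_ hcreach
    intro s hs
    exact ⟨fun h => hcon.1 ((Subtype.ext h : s = a) ▸ hs),
      fun h => hcon.2 ((Subtype.ext h : s = b) ▸ hs)⟩
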